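/- Let G be a finite nonabelian group. A subset of 𝒵(G) = {Z(C_G(g)) : g ∈ G \ Z(G)} has union equal to G if and only if it contains every maximal element of 𝒵(G); in particular the set of maximal elements of 𝒵(G) is an irredundant cover of G (removing any member destroys the covering property). -/

import Mathlib

variable {G : Type*} [Group G] [Fintype G]

/-- The centralizer of an element `g` of `G`. -/
def centG (g : G) : Subgroup G := Subgroup.centralizer ({g} : Set G)

/-- `Z(g) = Z(C_G(g))`, the center of the centralizer of `g`, as a subgroup of `G`. -/
def zCent (g : G) : Subgroup G :=
  (Subgroup.center ↥(Subgroup.centralizer ({g} : Set G))).map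
    (Subgroup.centralizer ({g} : Set G)).subtype

/-- `𝒵(G)`: the set of centers of centralizers of noncentral elements. -/
def zSet (G : Type*) [Group G] [Fintype G] : Set (Subgroup G) :=
  {H | ∃ g : G, g ∉ Subgroup.center G ∧ H = zCent g}

/-- The maximal elements of `𝒵(G)` under inclusion. -/
def zMax (G : Type*) [Group G] [Fintype G] : Set (Subgroup G) :=
  {H ∈ zSet G | ∀ K ∈ zSet G, H ≤ K → H = K}

lemma mem_zCent_iff {x g : G} :
    x ∈ zCent g ↔ ∀ c ∈ Subgroup.centralizer ({g} : Set G), c * x = x * c := by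
  constructor
  · rintro ⟨⟨y, hyC⟩, hy, rfl⟩
    intro c hc
    have := Subgroup.mem_center_iff.mp hy ⟨c, hc⟩
    exact Subtype.ext_iff.mp this
  · intro h
    have hg : g ∈ Subgroup.centralizer ({g} : Set G) := by
      rw [Subgroup.mem_centralizer_iff]
      intro y hy
      rw [Set.mem_singleton_iff] at hy
      rw [hy]
    have hxC : x ∈ Subgroup.centralizer ({g} : Set G) := by
      rw [Subgroup.mem_centralizer_iff]
      intro y hy
      rw [Set.mem_singleton_iff] at hy
      rw [hy]
      exact h g hg
    exact ⟨⟨x, hxC⟩, Subgroup.mem_center_iff.mpr fun z => Subtype.ext (h z z.2), rfl⟩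

lemma self_mem_zCent (g : G) : g ∈ zCent g := by
  rw [mem_zCent_iff]
  intro c hc
  exact ((Subgroup.mem_centralizer_iff.mp hc) g rfl).symm

lemma center_le_zCent (g : G) : Subgroup.center G ≤ zCent g := by
  intro z hz
  rw [mem_zCent_iff]
  intro c _
  exact Subgroup.mem_center_iff.mp hz c

lemma zCent_le_of_mem {x g : G} (hx : x ∈ zCent g) : zCent x ≤ zCent g := by
  intro y hy
  rw [mem_zCent_iff] at hy ⊢
  intro c hc
  apply hy
  rw [Subgroup.mem_centralizer_iff]
  rintro w hw
  rw [Set.mem_singleton_iff] at hw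
  subst hw
  exact (mem_zCent_iff.mp hx c hc).symm

lemma exists_zMax_le {H : Subgroup G} (hH : H ∈ zSet G) : ∃ K ∈ zMax G, H ≤ K := by
  haveI : Finite (Subgroup G) :=
    Finite.of_injective (fun H : Subgroup G => (H : Set G)) SetLike.coe_injective
  obtain ⟨K, ⟨hKz, hHK⟩, hmax⟩ :=
    Set.Finite.exists_maximalFor id {K ∈ zSet G | H ≤ K} (Set.toFinite _) ⟨H, hH, le_rfl⟩
  exact ⟨K, ⟨hKz, fun K' hK' hle => le_antisymm hle (hmax ⟨hK', hHK.trans hle⟩ hle)⟩, hHK⟩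

lemma cover_zMax (hna : ∃ a b : G, a * b ≠ b * a) : ∀ x : G, ∃ H ∈ zMax G, x ∈ H := by
  obtain ⟨a, b, hab⟩ := hna
  have ha : a ∉ Subgroup.center G := fun h => hab (Subgroup.mem_center_iff.mp h b).symm
  intro x
  by_cases hx : x ∈ Subgroup.center G
  · obtain ⟨K, hK, hle⟩ := exists_zMax_le (H := zCent a) ⟨a, ha, rfl⟩
    exact ⟨K, hK, hle (center_le_zCent a hx)⟩
  · obtain ⟨K, hK, hle⟩ := exists_zMax_le (H := zCent x) ⟨x, hx, rfl⟩
    exact ⟨K, hK, hle (self_mem_zCent x)⟩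

theorem stmt_12 (hna : ∃ a b : G, a * b ≠ b * a) :
    (∀ S : Set (Subgroup G), S ⊆ zSet G →
        ((∀ x : G, ∃ H ∈ S, x ∈ H) ↔ zMax G ⊆ S)) ∧
    (∀ x : G, ∃ H ∈ zMax G, x ∈ H) ∧
    (∀ H ∈ zMax G, ¬ ∀ x : G, ∃ K ∈ zMax G \ {H}, x ∈ K) := by
  refine ⟨?_, cover_zMax hna, ?_⟩
  · intro S hS
    constructor
    · intro hcov H hH
      obtain ⟨hHz, hHmax⟩ := hH
      obtain ⟨g, hg, rfl⟩ := hHz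
      obtain ⟨K, hKS, hgK⟩ := hcov g
      obtain ⟨h, hh, hKeq⟩ := hS hKS
      have hle : zCent g ≤ K := by
        subst hKeq; exact zCent_le_of_mem hgK
      have := hHmax K (hS hKS) hle
      rwa [this]
    · intro hsub x
      obtain ⟨H, hH, hx⟩ := cover_zMax hna x
      exact ⟨H, hsub hH, hx⟩
  · intro H hH hcov
    obtain ⟨hHz, hHmax⟩ := hH
    obtain ⟨g, hg, rfl⟩ := hHz
    obtain ⟨K, ⟨hKmax, hKne⟩, hgK⟩ := hcov g
    obtain ⟨h, hh, hKeq⟩ := hKmax.1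
    have hle : zCent g ≤ K := by subst hKeq; exact zCent_le_of_mem hgK
    exact hKne (Set.mem_singleton_iff.mpr (hHmax K hKmax.1 hle).symm)
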